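/- Let T(m,j) = Σ_{d | m̄, ℓ(d) ≡ j (mod 6)} μ(d) where m̄ is the radical of a squarefree-supported odd m coprime to 31 with no prime factor p satisfying ℓ(p)=0, ω_i the number of prime factors of m with ℓ(p)=i, and ℓ completely additive with values in ℤ/6ℤ determined by the orbit of p under multiplication by 2 mod 31. Then T(m,j) = (2^{ω₃}/3)·√3^{ω₂+ω₄}·cos((π/6)(2ω₅−2ω₁+ω₄−ω₂−2j)) + 0^{ω₃}·(√3^ω/3)·cos((π/6)(ω₂+ω₅−ω₁−ω₄−4j)) + 0^{ω₂+ω₄}·((−1)^j/6)·2^ω, where ω = ω₁+ω₂+ω₃+ω₄+ω₅ and 0^0 = 1, 0^t = 0 for t > 0. -/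

import Mathlib

open Finset ArithmeticFunction Real

/-- The radical of `m`: the product of its distinct prime factors. -/
def rad (m : ℕ) : ℕ := ∏ p ∈ m.primeFactors, p

/-- `ω_i(m)`: the number of distinct prime factors `p` of `m` with `ℓ(p) = i`. -/
def omegaL (ℓ : ℕ → ZMod 6) (m : ℕ) (i : ℕ) : ℕ :=
  (m.primeFactors.filter fun p => ℓ p = (i : ZMod 6)).card

lemma prod_zmod6 {M : Type*} [CommMonoid M] (f : ZMod 6 → M) :
    ∏ b : ZMod 6, f b = f 0 * f 1 * f 2 * f 3 * f 4 * f 5 := by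
  show ∏ b : Fin 6, f b = _
  exact Fin.prod_univ_six f

noncomputable def eC (x : ℝ) : ℂ := Complex.exp (x * Complex.I)

lemma eC_add (x y : ℝ) : eC (x + y) = eC x * eC y := by
  simp only [eC, ← Complex.exp_add]
  congr 1
  push_cast
  ring

lemma eC_pow (x : ℝ) (n : ℕ) : eC x ^ n = eC (n * x) := by
  simp only [eC, ← Complex.exp_nat_mul]
  congr 1
  push_cast
  ring

lemma eC_zero : eC 0 = 1 := by simp [eC]

lemma eC_two_pi : eC (2 * Real.pi) = 1 := by
  simp only [eC]
  rw [← Complex.exp_two_pi_mul_I]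
  congr 1
  push_cast
  ring

lemma eC_val (x : ℝ) : eC x = (Real.cos x : ℂ) + (Real.sin x : ℂ) * Complex.I := by
  rw [eC, Complex.exp_mul_I, Complex.ofReal_cos, Complex.ofReal_sin]

lemma eC_cos (x : ℝ) : eC x + eC (-x) = 2 * (Real.cos x : ℂ) := by
  rw [eC_val, eC_val, Real.cos_neg, Real.sin_neg]
  push_cast
  ring

lemma one_sub_eC (x : ℝ) :
    1 - eC (2 * x) = (2 * Real.sin x : ℝ) * eC (x - Real.pi / 2) := by
  have hpy : (Real.sin x : ℂ) ^ 2 + (Real.cos x : ℂ) ^ 2 = 1 := by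
    rw [← Complex.ofReal_pow, ← Complex.ofReal_pow, ← Complex.ofReal_add,
      Real.sin_sq_add_cos_sq, Complex.ofReal_one]
  rw [show (2:ℝ) * x = x + x by ring, eC_add, eC_val, eC_val]
  rw [Real.cos_sub, Real.sin_sub, Real.cos_pi_div_two, Real.sin_pi_div_two]
  push_cast [-Complex.ofReal_sin, -Complex.ofReal_cos]
  linear_combination (-1 : ℂ) * hpy + (-(Real.sin x : ℂ)^2) * Complex.I_sq

noncomputable def ζC : ℂ := eC (Real.pi / 3)

lemma ζC_def : ζC = eC (Real.pi / 3) := rfl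

lemma zeta6 : ζC ^ 6 = 1 := by
  rw [ζC_def, eC_pow, show ((6:ℕ):ℝ) * (Real.pi / 3) = 2 * Real.pi by push_cast; ring, eC_two_pi]

lemma zprim : IsPrimitiveRoot ζC 6 := by
  have h := Complex.isPrimitiveRoot_exp 6 (by norm_num)
  convert h using 2
  rw [ζC_def, eC]
  congr 1
  push_cast
  ring

lemma zmod6 (a : ℕ) : ζC ^ a = ζC ^ (a % 6) := by
  conv_lhs => rw [← Nat.div_add_mod a 6]
  rw [pow_add, pow_mul, zeta6, one_pow, one_mul]

lemma z8 : ζC ^ 8 = ζC ^ 2 := by rw [zmod6]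
lemma z9 : ζC ^ 9 = ζC ^ 3 := by rw [zmod6]
lemma z10 : ζC ^ 10 = ζC ^ 4 := by rw [zmod6]
lemma z12 : ζC ^ 12 = 1 := by rw [zmod6]; norm_num
lemma z15 : ζC ^ 15 = ζC ^ 3 := by rw [zmod6]
lemma z16 : ζC ^ 16 = ζC ^ 4 := by rw [zmod6]
lemma z20 : ζC ^ 20 = ζC ^ 2 := by rw [zmod6]
lemma z25 : ζC ^ 25 = ζC := by rw [zmod6]; norm_num

lemma P2 : ζC ^ 2 = eC (2 * (Real.pi / 3)) := by
  rw [ζC_def, eC_pow]; norm_num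

lemma P3 : ζC ^ 3 = -1 := by
  rw [ζC_def, eC_pow, show ((3:ℕ):ℝ) * (Real.pi / 3) = Real.pi by push_cast; ring]
  exact Complex.exp_pi_mul_I

lemma P4 : ζC ^ 4 = eC (-(2 * (Real.pi / 3))) := by
  rw [ζC_def, eC_pow,
    show ((4:ℕ):ℝ) * (Real.pi / 3) = -(2 * (Real.pi / 3)) + 2 * Real.pi by push_cast; ring,
    eC_add, eC_two_pi, mul_one]

lemma P5 : ζC ^ 5 = eC (-(Real.pi / 3)) := by
  rw [ζC_def, eC_pow,
    show ((5:ℕ):ℝ) * (Real.pi / 3) = -(Real.pi / 3) + 2 * Real.pi by push_cast; ring,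
    eC_add, eC_two_pi, mul_one]

lemma A1 : 1 - ζC = eC (-(Real.pi / 3)) := by
  have h := one_sub_eC (Real.pi / 6)
  rw [show 2 * (Real.pi / 6) = Real.pi / 3 by ring, Real.sin_pi_div_six,
    show Real.pi / 6 - Real.pi / 2 = -(Real.pi / 3) by ring] at h
  rw [ζC_def, h]
  norm_num

lemma A2 : 1 - ζC ^ 2 = (Real.sqrt 3 : ℂ) * eC (-(Real.pi / 6)) := by
  have h := one_sub_eC (Real.pi / 3)
  rw [Real.sin_pi_div_three, show Real.pi / 3 - Real.pi / 2 = -(Real.pi / 6) by ring] at h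
  rw [P2, h]
  push_cast
  ring

lemma A3 : 1 - ζC ^ 3 = 2 := by rw [P3]; norm_num

lemma A4 : 1 - ζC ^ 4 = (Real.sqrt 3 : ℂ) * eC (Real.pi / 6) := by
  have h := one_sub_eC (2 * Real.pi / 3)
  rw [show Real.sin (2 * Real.pi / 3) = Real.sin (Real.pi / 3) by
        rw [show 2 * Real.pi / 3 = Real.pi - Real.pi / 3 by ring, Real.sin_pi_sub],
    Real.sin_pi_div_three,
    show 2 * Real.pi / 3 - Real.pi / 2 = Real.pi / 6 by ring] at h
  rw [show (2:ℝ) * (2 * Real.pi / 3) = -(2 * (Real.pi / 3)) + 2 * Real.pi by ring, eC_add,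
    eC_two_pi, mul_one, ← P4] at h
  rw [h]
  push_cast
  ring

lemma A5 : 1 - ζC ^ 5 = eC (Real.pi / 3) := by
  have h := one_sub_eC (5 * Real.pi / 6)
  rw [show Real.sin (5 * Real.pi / 6) = Real.sin (Real.pi / 6) by
        rw [show 5 * Real.pi / 6 = Real.pi - Real.pi / 6 by ring, Real.sin_pi_sub],
    Real.sin_pi_div_six,
    show 5 * Real.pi / 6 - Real.pi / 2 = Real.pi / 3 by ring] at h
  rw [show (2:ℝ) * (5 * Real.pi / 6) = -(Real.pi / 3) + 2 * Real.pi by ring, eC_add,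
    eC_two_pi, mul_one, ← P5] at h
  rw [h]
  norm_num

lemma pre2 (j : ℕ) : (ζC ^ (5 * j)) ^ 2 = eC (-(2 * (Real.pi / 3))) ^ j := by
  rw [← pow_mul, show 5 * j * 2 = 10 * j by ring, pow_mul, z10, P4]

lemma pre3 (j : ℕ) : (ζC ^ (5 * j)) ^ 3 = (-1 : ℂ) ^ j := by
  rw [← pow_mul, show 5 * j * 3 = 15 * j by ring, pow_mul, z15, P3]

lemma pre4 (j : ℕ) : (ζC ^ (5 * j)) ^ 4 = eC (2 * (Real.pi / 3)) ^ j := by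
  rw [← pow_mul, show 5 * j * 4 = 20 * j by ring, pow_mul, z20, P2]

lemma pre5 (j : ℕ) : (ζC ^ (5 * j)) ^ 5 = eC (Real.pi / 3) ^ j := by
  rw [← pow_mul, show 5 * j * 5 = 25 * j by ring, pow_mul, z25, ζC_def]

lemma key_sum (ω₁ ω₂ ω₃ ω₄ ω₅ j : ℕ) (hW : ω₁ + ω₂ + ω₃ + ω₄ + ω₅ ≠ 0) :
    ∑ t ∈ Finset.range 6, (ζC ^ (5 * j)) ^ t *
      ((1 - ζC ^ (1 * t)) ^ ω₁ * (1 - ζC ^ (2 * t)) ^ ω₂ * (1 - ζC ^ (3 * t)) ^ ω₃ *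
        (1 - ζC ^ (4 * t)) ^ ω₄ * (1 - ζC ^ (5 * t)) ^ ω₅) =
    6 * (((2 : ℝ) ^ ω₃ / 3 * Real.sqrt 3 ^ (ω₂ + ω₄) *
        Real.cos (Real.pi / 6 * ((2 * ω₅ - 2 * ω₁ + ω₄ - ω₂ - 2 * j : ℤ) : ℝ)) +
      (if ω₃ = 0 then (1:ℝ) else 0) * Real.sqrt 3 ^ (ω₁ + ω₂ + ω₃ + ω₄ + ω₅) / 3 *
        Real.cos (Real.pi / 6 * ((ω₂ + ω₅ - ω₁ - ω₄ - 4 * j : ℤ) : ℝ)) +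
      (if ω₂ + ω₄ = 0 then (1:ℝ) else 0) * ((-1 : ℝ) ^ j / 6) *
        2 ^ (ω₁ + ω₂ + ω₃ + ω₄ + ω₅) : ℝ) : ℂ) := by
  set a : ℝ := Real.pi / 6 * ((2 * ω₅ - 2 * ω₁ + ω₄ - ω₂ - 2 * j : ℤ) : ℝ) with ha
  set b : ℝ := Real.pi / 6 * ((ω₂ + ω₅ - ω₁ - ω₄ - 4 * j : ℤ) : ℝ) with hb
  have ht0 : (ζC ^ (5 * j)) ^ 0 *
      ((1 - ζC ^ (1 * 0)) ^ ω₁ * (1 - ζC ^ (2 * 0)) ^ ω₂ * (1 - ζC ^ (3 * 0)) ^ ω₃ *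
        (1 - ζC ^ (4 * 0)) ^ ω₄ * (1 - ζC ^ (5 * 0)) ^ ω₅) = 0 := by
    simp only [Nat.mul_zero, pow_zero, sub_self, one_mul]
    rw [← pow_add, ← pow_add, ← pow_add, ← pow_add]
    exact zero_pow hW
  have ht1 : (ζC ^ (5 * j)) ^ 1 *
      ((1 - ζC ^ (1 * 1)) ^ ω₁ * (1 - ζC ^ (2 * 1)) ^ ω₂ * (1 - ζC ^ (3 * 1)) ^ ω₃ *
        (1 - ζC ^ (4 * 1)) ^ ω₄ * (1 - ζC ^ (5 * 1)) ^ ω₅) =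
      (2:ℂ) ^ ω₃ * (Real.sqrt 3 : ℂ) ^ (ω₂ + ω₄) * eC a := by
    norm_num
    rw [A1, A2, A3, A4, A5, pow_mul, P5]
    rw [mul_pow, mul_pow]
    rw [eC_pow, eC_pow, eC_pow, eC_pow, eC_pow]
    rw [show a = (j:ℝ) * (-(Real.pi / 3)) + ((ω₁:ℝ) * (-(Real.pi / 3)) +
      ((ω₂:ℝ) * (-(Real.pi / 6)) + ((ω₄:ℝ) * (Real.pi / 6) + (ω₅:ℝ) * (Real.pi / 3))))
      from by rw [ha]; push_cast; ring]
    rw [eC_add, eC_add, eC_add, eC_add, pow_add]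
    ring
  have ht5 : (ζC ^ (5 * j)) ^ 5 *
      ((1 - ζC ^ (1 * 5)) ^ ω₁ * (1 - ζC ^ (2 * 5)) ^ ω₂ * (1 - ζC ^ (3 * 5)) ^ ω₃ *
        (1 - ζC ^ (4 * 5)) ^ ω₄ * (1 - ζC ^ (5 * 5)) ^ ω₅) =
      (2:ℂ) ^ ω₃ * (Real.sqrt 3 : ℂ) ^ (ω₂ + ω₄) * eC (-a) := by
    norm_num
    rw [pre5, z10, z15, z20, z25, A1, A2, A3, A4, A5]
    rw [mul_pow, mul_pow]
    rw [eC_pow, eC_pow, eC_pow, eC_pow, eC_pow]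
    rw [show -a = (j:ℝ) * (Real.pi / 3) + ((ω₁:ℝ) * (Real.pi / 3) +
      ((ω₂:ℝ) * (Real.pi / 6) + ((ω₄:ℝ) * (-(Real.pi / 6)) + (ω₅:ℝ) * (-(Real.pi / 3)))))
      from by rw [ha]; push_cast; ring]
    rw [eC_add, eC_add, eC_add, eC_add, pow_add]
    ring
  have ht2 : (ζC ^ (5 * j)) ^ 2 *
      ((1 - ζC ^ (1 * 2)) ^ ω₁ * (1 - ζC ^ (2 * 2)) ^ ω₂ * (1 - ζC ^ (3 * 2)) ^ ω₃ *
        (1 - ζC ^ (4 * 2)) ^ ω₄ * (1 - ζC ^ (5 * 2)) ^ ω₅) =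
      (if ω₃ = 0 then (1:ℂ) else 0) * (Real.sqrt 3 : ℂ) ^ (ω₁ + ω₂ + ω₄ + ω₅) * eC b := by
    norm_num
    rw [pre2, z8, z10, zeta6, sub_self]
    by_cases h3 : ω₃ = 0
    · rw [if_pos h3, h3, pow_zero, A2, A4]
      rw [mul_pow, mul_pow, mul_pow, mul_pow]
      rw [eC_pow, eC_pow, eC_pow, eC_pow, eC_pow]
      rw [show b = (j:ℝ) * (-(2 * (Real.pi / 3))) + ((ω₁:ℝ) * (-(Real.pi / 6)) +
        ((ω₂:ℝ) * (Real.pi / 6) + ((ω₄:ℝ) * (-(Real.pi / 6)) + (ω₅:ℝ) * (Real.pi / 6))))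
        from by rw [hb]; push_cast; ring]
      rw [eC_add, eC_add, eC_add, eC_add, pow_add, pow_add, pow_add]
      ring
    · rw [if_neg h3, zero_pow h3]
      ring
  have ht4 : (ζC ^ (5 * j)) ^ 4 *
      ((1 - ζC ^ (1 * 4)) ^ ω₁ * (1 - ζC ^ (2 * 4)) ^ ω₂ * (1 - ζC ^ (3 * 4)) ^ ω₃ *
        (1 - ζC ^ (4 * 4)) ^ ω₄ * (1 - ζC ^ (5 * 4)) ^ ω₅) =
      (if ω₃ = 0 then (1:ℂ) else 0) * (Real.sqrt 3 : ℂ) ^ (ω₁ + ω₂ + ω₄ + ω₅) * eC (-b) := by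
    norm_num
    rw [pre4, z8, z12, z16, z20, sub_self]
    by_cases h3 : ω₃ = 0
    · rw [if_pos h3, h3, pow_zero, A2, A4]
      rw [mul_pow, mul_pow, mul_pow, mul_pow]
      rw [eC_pow, eC_pow, eC_pow, eC_pow, eC_pow]
      rw [show -b = (j:ℝ) * (2 * (Real.pi / 3)) + ((ω₁:ℝ) * (Real.pi / 6) +
        ((ω₂:ℝ) * (-(Real.pi / 6)) + ((ω₄:ℝ) * (Real.pi / 6) + (ω₅:ℝ) * (-(Real.pi / 6)))))
        from by rw [hb]; push_cast; ring]
      rw [eC_add, eC_add, eC_add, eC_add, pow_add, pow_add, pow_add]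
      ring
    · rw [if_neg h3, zero_pow h3]
      ring
  have ht3 : (ζC ^ (5 * j)) ^ 3 *
      ((1 - ζC ^ (1 * 3)) ^ ω₁ * (1 - ζC ^ (2 * 3)) ^ ω₂ * (1 - ζC ^ (3 * 3)) ^ ω₃ *
        (1 - ζC ^ (4 * 3)) ^ ω₄ * (1 - ζC ^ (5 * 3)) ^ ω₅) =
      (if ω₂ + ω₄ = 0 then (1:ℂ) else 0) * (-1 : ℂ) ^ j * 2 ^ (ω₁ + ω₃ + ω₅) := by
    by_cases h24 : ω₂ + ω₄ = 0
    · have h2 : ω₂ = 0 := by omega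
      have h4 : ω₄ = 0 := by omega
      rw [if_pos h24]
      norm_num
      rw [pre3, z9, z15, zeta6, A3, h2, h4, pow_zero, pow_zero, pow_add, pow_add]
      ring
    · rw [if_neg h24]
      rw [show (2*3:ℕ) = 6 from rfl, show (4*3:ℕ) = 12 from rfl]
      simp only [zeta6, z12, sub_self]
      rcases (by omega : ω₂ ≠ 0 ∨ ω₄ ≠ 0) with h | h
      · rw [zero_pow h]; ring
      · rw [zero_pow h]; ring
  simp only [Finset.sum_range_succ, Finset.sum_range_zero]
  rw [zero_add, ht0, ht1, ht2, ht3, ht4, ht5]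
  by_cases h3 : ω₃ = 0
  · by_cases h24 : ω₂ + ω₄ = 0
    · have h2 : ω₂ = 0 := by omega
      have h4 : ω₄ = 0 := by omega
      simp only [h3, h2, h4, Nat.add_zero, Nat.zero_add, eq_self_iff_true, if_true, pow_zero]
      push_cast [-Complex.ofReal_cos, -Complex.ofReal_sin]
      linear_combination eC_cos a + ((Real.sqrt 3 : ℂ)) ^ (ω₁ + ω₅) * eC_cos b
    · simp only [h3, eq_self_iff_true, if_true, if_neg h24, pow_zero]
      push_cast [-Complex.ofReal_cos, -Complex.ofReal_sin]
      linear_combination ((Real.sqrt 3 : ℂ)) ^ (ω₂ + ω₄) * eC_cos a +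
        ((Real.sqrt 3 : ℂ)) ^ (ω₁ + ω₂ + ω₄ + ω₅) * eC_cos b
  · by_cases h24 : ω₂ + ω₄ = 0
    · have h2 : ω₂ = 0 := by omega
      have h4 : ω₄ = 0 := by omega
      simp only [h2, h4, Nat.add_zero, Nat.zero_add, eq_self_iff_true, if_true, if_neg h3,
        pow_zero]
      push_cast [-Complex.ofReal_cos, -Complex.ofReal_sin]
      linear_combination (2:ℂ) ^ ω₃ * eC_cos a
    · simp only [if_neg h3, if_neg h24]
      push_cast [-Complex.ofReal_cos, -Complex.ofReal_sin]
      linear_combination (2:ℂ) ^ ω₃ * ((Real.sqrt 3 : ℂ)) ^ (ω₂ + ω₄) * eC_cos a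

lemma prod_neg' (S : Finset ℕ) (g : ℕ → ℂ) :
    ∏ p ∈ S, -g p = (-1 : ℂ) ^ S.card * ∏ p ∈ S, g p := by
  rw [← Finset.prod_const, ← Finset.prod_mul_distrib]
  simp [neg_one_mul]

lemma phi_sum (S : Finset ℕ) (g : ℕ → ZMod 6) :
    ζC ^ (∑ p ∈ S, g p).val = ∏ p ∈ S, ζC ^ (g p).val := by
  classical
  induction S using Finset.induction_on with
  | empty => simp
  | insert _ _ ha ih =>
    rw [Finset.sum_insert ha, Finset.prod_insert ha, ← ih, ZMod.val_add, ← zmod6, pow_add]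

lemma indicator_sum (j : ℕ) (hj : j < 6) (x : ZMod 6) :
    (if x = (j : ZMod 6) then (6:ℂ) else 0) =
      ∑ t ∈ Finset.range 6, (ζC ^ (x.val + 5 * j)) ^ t := by
  by_cases h : x = (j : ZMod 6)
  · rw [if_pos h, h, ZMod.val_cast_of_lt hj, show j + 5 * j = 6 * j by ring, pow_mul, zeta6,
      one_pow]
    simp
  · rw [if_neg h]
    have hlt : x.val < 6 := ZMod.val_lt x
    have hnd : ¬ (6 ∣ x.val + 5 * j) := by
      intro hd
      apply h
      have hv : x.val = j := by omega
      calc x = ((x.val : ℕ) : ZMod 6) := (ZMod.natCast_rightInverse x).symm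
      _ = (j : ZMod 6) := by rw [hv]
    have hne : ζC ^ (x.val + 5 * j) ≠ 1 := fun e => hnd ((zprim.pow_eq_one_iff_dvd _).mp e)
    rw [geom_sum_eq hne, pow_right_comm, zeta6, one_pow, sub_self, zero_div]

lemma sqf_prod (S : Finset ℕ) (h : ∀ p ∈ S, p.Prime) : Squarefree (∏ p ∈ S, p) := by
  classical
  induction S using Finset.induction_on with
  | empty => simpa using squarefree_one
  | @insert a s ha ih =>
    rw [Finset.prod_insert ha]
    have hp := h a (Finset.mem_insert_self a s)
    have hcop : Nat.Coprime a (∏ p ∈ s, p) :=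
      Nat.Coprime.prod_right fun q hq =>
        (Nat.coprime_primes hp (h q (Finset.mem_insert_of_mem hq))).mpr
          (fun e => ha (e ▸ hq))
    exact (Nat.squarefree_mul hcop).mpr
      ⟨hp.squarefree, ih fun q hq => h q (Finset.mem_insert_of_mem hq)⟩

lemma moeb_prod (S : Finset ℕ) (h : ∀ p ∈ S, p.Prime) :
    moebius (∏ p ∈ S, p) = (-1 : ℤ) ^ S.card := by
  classical
  induction S using Finset.induction_on with
  | empty => simpa using moebius_apply_one
  | @insert a s ha ih =>
    rw [Finset.prod_insert ha, Finset.card_insert_of_notMem ha]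
    have hp := h a (Finset.mem_insert_self a s)
    have hcop : Nat.Coprime a (∏ p ∈ s, p) :=
      Nat.Coprime.prod_right fun q hq =>
        (Nat.coprime_primes hp (h q (Finset.mem_insert_of_mem hq))).mpr
          (fun e => ha (e ▸ hq))
    rw [isMultiplicative_moebius.map_mul_of_coprime hcop, moebius_apply_prime hp,
      ih fun q hq => h q (Finset.mem_insert_of_mem hq), pow_succ]
    ring

lemma ell_prod (ℓ : ℕ → ZMod 6)
    (hadd : ∀ a b : ℕ, ¬ 31 ∣ a → ¬ 31 ∣ b → ℓ (a * b) = ℓ a + ℓ b)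
    (S : Finset ℕ) (h : ∀ p ∈ S, ¬ (31 ∣ p)) : ℓ (∏ p ∈ S, p) = ∑ p ∈ S, ℓ p := by
  classical
  have h1 : ℓ 1 = 0 := by
    have h' := hadd 1 1 (by norm_num) (by norm_num)
    rw [mul_one] at h'
    exact add_eq_right.mp h'.symm
  induction S using Finset.induction_on with
  | empty => simpa using h1
  | @insert a s ha ih =>
    have hnp : ¬ (31 ∣ ∏ p ∈ s, p) := by
      intro hd
      obtain ⟨q, hq, hdq⟩ :=
        ((Nat.prime_iff.mp (by norm_num : Nat.Prime 31)).dvd_finset_prod_iff _).mp hd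
      exact h q (Finset.mem_insert_of_mem hq) hdq
    rw [Finset.prod_insert ha, Finset.sum_insert ha,
      hadd a _ (h a (Finset.mem_insert_self a s)) hnp,
      ih fun q hq => h q (Finset.mem_insert_of_mem hq)]
theorem T_formula
    (ℓ : ℕ → ZMod 6)
    -- ℓ is determined on odd primes ≠ 31 by the orbit under multiplication by 2 mod 31
    (hℓ : ∀ p : ℕ, p.Prime → p ≠ 2 → p ≠ 31 →
      ∀ j : ℕ, j < 6 → (ℓ p = (j : ZMod 6) ↔ ∃ k : ℕ, k ≤ 4 ∧ (p : ZMod 31) = 2 ^ k * 3 ^ j))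
    -- ℓ is completely additive on integers not divisible by 31
    (hadd : ∀ a b : ℕ, ¬ 31 ∣ a → ¬ 31 ∣ b → ℓ (a * b) = ℓ a + ℓ b)
    (m : ℕ) (hm1 : m ≠ 1) (hmodd : Odd m) (hm31 : ¬ 31 ∣ m)
    (hP0 : ∀ p ∈ m.primeFactors, ℓ p ≠ 0)
    (j : ℕ) (hj : j < 6)
    (ω₁ ω₂ ω₃ ω₄ ω₅ W : ℕ)
    (h1 : ω₁ = omegaL ℓ m 1) (h2 : ω₂ = omegaL ℓ m 2) (h3 : ω₃ = omegaL ℓ m 3)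
    (h4 : ω₄ = omegaL ℓ m 4) (h5 : ω₅ = omegaL ℓ m 5)
    (hW : W = ω₁ + ω₂ + ω₃ + ω₄ + ω₅)
    (T : ℤ)
    (hT : T = ∑ d ∈ ((rad m).divisors.filter fun d => ℓ d = (j : ZMod 6)), moebius d) :
    (T : ℝ) =
      (2 : ℝ) ^ ω₃ / 3 * (Real.sqrt 3) ^ (ω₂ + ω₄) *
        Real.cos (Real.pi / 6 * ((2 * ω₅ - 2 * ω₁ + ω₄ - ω₂ - 2 * j : ℤ) : ℝ)) +
      (if ω₃ = 0 then 1 else 0) * (Real.sqrt 3) ^ W / 3 *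
        Real.cos (Real.pi / 6 * ((ω₂ + ω₅ - ω₁ - ω₄ - 4 * j : ℤ) : ℝ)) +
      (if ω₂ + ω₄ = 0 then 1 else 0) * ((-1 : ℝ) ^ j / 6) * 2 ^ W := by
  classical
  have hm0 : m ≠ 0 := by
    obtain ⟨k, hk⟩ := hmodd
    omega
  have hprimes : ∀ p ∈ m.primeFactors, p.Prime := fun p hp =>
    Nat.prime_of_mem_primeFactors hp
  have h31 : ∀ p ∈ m.primeFactors, ¬ (31 ∣ p) := by
    intro p hp hdvd
    have heq : (31 : ℕ) = p :=
      (Nat.prime_dvd_prime_iff_eq (by norm_num) (hprimes p hp)).mp hdvd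
    exact hm31 (heq ▸ Nat.dvd_of_mem_primeFactors hp)
  have hsf : Squarefree (rad m) := sqf_prod m.primeFactors hprimes
  have hrad0 : rad m ≠ 0 :=
    (Finset.prod_pos fun p hp => (hprimes p hp).pos).ne'
  -- Step A : sum over subsets of the prime factors
  have hT' : T = ∑ S ∈ m.primeFactors.powerset,
      (if (∑ p ∈ S, ℓ p) = (j : ZMod 6) then (-1 : ℤ) ^ S.card else 0) := by
    rw [hT, Finset.sum_filter, ← Nat.divisors_filter_squarefree_of_squarefree hsf,
      Nat.sum_divisors_filter_squarefree hrad0, Nat.factors_eq]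
    have hPF : (((rad m).primeFactorsList : Multiset ℕ)).toFinset = m.primeFactors :=
      Nat.primeFactors_prod hprimes
    rw [hPF]
    refine Finset.sum_congr rfl fun S hS => ?_
    have hSP : S ⊆ m.primeFactors := Finset.mem_powerset.mp hS
    have hprod : S.val.prod = ∏ p ∈ S, p := by rw [Finset.prod_val]; rfl
    rw [hprod, moeb_prod S (fun p hp => hprimes p (hSP hp)),
      ell_prod ℓ hadd S (fun p hp => h31 p (hSP hp))]
  -- fiber cardinalities
  have hc0 : (m.primeFactors.filter fun p => ℓ p = (0 : ZMod 6)).card = 0 :=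
    Finset.card_eq_zero.mpr (Finset.filter_eq_empty_iff.mpr fun p hp => hP0 p hp)
  have hc1 : (m.primeFactors.filter fun p => ℓ p = (1 : ZMod 6)).card = ω₁ := by
    rw [h1]; simp [omegaL]
  have hc2 : (m.primeFactors.filter fun p => ℓ p = (2 : ZMod 6)).card = ω₂ := by
    rw [h2]; simp [omegaL]
  have hc3 : (m.primeFactors.filter fun p => ℓ p = (3 : ZMod 6)).card = ω₃ := by
    rw [h3]; simp [omegaL]
  have hc4 : (m.primeFactors.filter fun p => ℓ p = (4 : ZMod 6)).card = ω₄ := by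
    rw [h4]; simp [omegaL]
  have hc5 : (m.primeFactors.filter fun p => ℓ p = (5 : ZMod 6)).card = ω₅ := by
    rw [h5]; simp [omegaL]
  have hW0 : ω₁ + ω₂ + ω₃ + ω₄ + ω₅ ≠ 0 := by
    obtain ⟨p, hp⟩ := Nat.nonempty_primeFactors.mpr (by omega : 1 < m)
    have hb := hP0 p hp
    have hcases : ℓ p = 1 ∨ ℓ p = 2 ∨ ℓ p = 3 ∨ ℓ p = 4 ∨ ℓ p = 5 := by
      revert hb; generalize ℓ p = x; revert x; decide
    intro hzero
    rcases hcases with h | h | h | h | h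
    · have hm' := Finset.card_ne_zero_of_mem
        (s := m.primeFactors.filter fun q => ℓ q = (1 : ZMod 6))
        (Finset.mem_filter.mpr ⟨hp, h⟩)
      rw [hc1] at hm'; omega
    · have hm' := Finset.card_ne_zero_of_mem
        (s := m.primeFactors.filter fun q => ℓ q = (2 : ZMod 6))
        (Finset.mem_filter.mpr ⟨hp, h⟩)
      rw [hc2] at hm'; omega
    · have hm' := Finset.card_ne_zero_of_mem
        (s := m.primeFactors.filter fun q => ℓ q = (3 : ZMod 6))
        (Finset.mem_filter.mpr ⟨hp, h⟩)
      rw [hc3] at hm'; omega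
    · have hm' := Finset.card_ne_zero_of_mem
        (s := m.primeFactors.filter fun q => ℓ q = (4 : ZMod 6))
        (Finset.mem_filter.mpr ⟨hp, h⟩)
      rw [hc4] at hm'; omega
    · have hm' := Finset.card_ne_zero_of_mem
        (s := m.primeFactors.filter fun q => ℓ q = (5 : ZMod 6))
        (Finset.mem_filter.mpr ⟨hp, h⟩)
      rw [hc5] at hm'; omega
  -- main computation over ℂ
  have hmain : (T : ℂ) * 6 = ∑ t ∈ Finset.range 6, (ζC ^ (5 * j)) ^ t *
      ((1 - ζC ^ (1 * t)) ^ ω₁ * (1 - ζC ^ (2 * t)) ^ ω₂ * (1 - ζC ^ (3 * t)) ^ ω₃ *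
        (1 - ζC ^ (4 * t)) ^ ω₄ * (1 - ζC ^ (5 * t)) ^ ω₅) := by
    calc (T : ℂ) * 6
        = ∑ S ∈ m.primeFactors.powerset, (-1 : ℂ) ^ S.card *
            (if (∑ p ∈ S, ℓ p) = (j : ZMod 6) then (6 : ℂ) else 0) := by
          rw [hT']
          push_cast
          rw [Finset.sum_mul]
          refine Finset.sum_congr rfl fun S _ => ?_
          split_ifs <;> push_cast <;> ring
      _ = ∑ S ∈ m.primeFactors.powerset, (-1 : ℂ) ^ S.card *
            ∑ t ∈ Finset.range 6, (ζC ^ ((∑ p ∈ S, ℓ p).val + 5 * j)) ^ t := by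
          refine Finset.sum_congr rfl fun S _ => ?_
          rw [indicator_sum j hj]
      _ = ∑ t ∈ Finset.range 6, ∑ S ∈ m.primeFactors.powerset,
            (-1 : ℂ) ^ S.card * (ζC ^ ((∑ p ∈ S, ℓ p).val + 5 * j)) ^ t := by
          simp_rw [Finset.mul_sum]
          rw [Finset.sum_comm]
      _ = ∑ t ∈ Finset.range 6, (ζC ^ (5 * j)) ^ t *
            ∑ S ∈ m.primeFactors.powerset, ∏ p ∈ S, -((ζC ^ (ℓ p).val) ^ t) := by
          refine Finset.sum_congr rfl fun t _ => ?_
          rw [Finset.mul_sum]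
          refine Finset.sum_congr rfl fun S _ => ?_
          rw [prod_neg', pow_add, mul_pow, phi_sum, ← Finset.prod_pow]
          ring
      _ = ∑ t ∈ Finset.range 6, (ζC ^ (5 * j)) ^ t *
            ∏ p ∈ m.primeFactors, (1 - (ζC ^ (ℓ p).val) ^ t) := by
          refine Finset.sum_congr rfl fun t _ => ?_
          congr 1
          have hpa := Finset.prod_add (fun p => -((ζC ^ (ℓ p).val) ^ t))
            (fun _ => (1 : ℂ)) m.primeFactors
          simp only [Finset.prod_const_one, mul_one] at hpa
          rw [← hpa]
          exact Finset.prod_congr rfl fun p _ => by ring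
      _ = ∑ t ∈ Finset.range 6, (ζC ^ (5 * j)) ^ t *
            ∏ b : ZMod 6, (1 - ζC ^ (b.val * t)) ^
              (m.primeFactors.filter fun p => ℓ p = b).card := by
          refine Finset.sum_congr rfl fun t _ => ?_
          congr 1
          rw [← Finset.prod_fiberwise_of_maps_to (fun p _ => Finset.mem_univ (ℓ p))
            (fun p => 1 - (ζC ^ (ℓ p).val) ^ t)]
          refine Finset.prod_congr rfl fun b _ => ?_
          refine (Finset.prod_congr rfl fun p hp => ?_).trans (Finset.prod_const _)
          rw [(Finset.mem_filter.mp hp).2, ← pow_mul]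
      _ = _ := by
          refine Finset.sum_congr rfl fun t _ => ?_
          congr 1
          rw [prod_zmod6]
          rw [show ((0 : ZMod 6)).val = 0 from rfl, show ((1 : ZMod 6)).val = 1 from rfl,
            show ((2 : ZMod 6)).val = 2 from rfl, show ((3 : ZMod 6)).val = 3 from rfl,
            show ((4 : ZMod 6)).val = 4 from rfl, show ((5 : ZMod 6)).val = 5 from rfl,
            hc0, hc1, hc2, hc3, hc4, hc5, pow_zero, one_mul]
  rw [key_sum ω₁ ω₂ ω₃ ω₄ ω₅ j hW0] at hmain
  have hfin : (T : ℂ) = (((2 : ℝ) ^ ω₃ / 3 * Real.sqrt 3 ^ (ω₂ + ω₄) *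
        Real.cos (Real.pi / 6 * ((2 * ω₅ - 2 * ω₁ + ω₄ - ω₂ - 2 * j : ℤ) : ℝ)) +
      (if ω₃ = 0 then (1:ℝ) else 0) * Real.sqrt 3 ^ (ω₁ + ω₂ + ω₃ + ω₄ + ω₅) / 3 *
        Real.cos (Real.pi / 6 * ((ω₂ + ω₅ - ω₁ - ω₄ - 4 * j : ℤ) : ℝ)) +
      (if ω₂ + ω₄ = 0 then (1:ℝ) else 0) * ((-1 : ℝ) ^ j / 6) *
        2 ^ (ω₁ + ω₂ + ω₃ + ω₄ + ω₅) : ℝ) : ℂ) := by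
    linear_combination (1 / 6 : ℂ) * hmain
  rw [hW]
  exact_mod_cast hfin
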